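/- Let n ≥ 1 and define a(x) := Σ_{k=0}^{⌊(n-1)/2⌋} (-1)^k s_{2k+1}(x) and b(x) := Σ_{k=0}^{⌊n/2⌋} (-1)^k s_{2k}(x) for x ∈ ℝⁿ, where s_m denotes the m-th elementary symmetric polynomial. Fix x ∈ ℝⁿ with b(x) ≠ 0 and fix an index k ∈ {1,…,n}. Then the function of one real variable t ↦ arctan( a(x₁,…,x_{k-1}, t, x_{k+1},…,x_n) / b(x₁,…,x_{k-1}, t, x_{k+1},…,x_n) ) is differentiable at t = x_k with derivative 1/(1 + x_k²). -/

import Mathlib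

open Finset Real

open Finset

/-- The `m`-th elementary symmetric polynomial of `x : Fin n → ℝ`. -/
noncomputable def esymmVal {n : ℕ} (m : ℕ) (x : Fin n → ℝ) : ℝ :=
  ∑ S ∈ Finset.powersetCard m (Finset.univ : Finset (Fin n)), ∏ i ∈ S, x i

/-- `a(x) = Σ_{k=0}^{⌊(n-1)/2⌋} (-1)^k s_{2k+1}(x)`. -/
noncomputable def aVal {n : ℕ} (x : Fin n → ℝ) : ℝ :=
  ∑ k ∈ Finset.range ((n - 1) / 2 + 1), (-1 : ℝ) ^ k * esymmVal (2 * k + 1) x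

/-- `b(x) = Σ_{k=0}^{⌊n/2⌋} (-1)^k s_{2k}(x)`. -/
noncomputable def bVal {n : ℕ} (x : Fin n → ℝ) : ℝ :=
  ∑ k ∈ Finset.range (n / 2 + 1), (-1 : ℝ) ^ k * esymmVal (2 * k) x

-- even/odd split of a range sum
lemma sum_range_even_odd {M : Type*} [AddCommMonoid M] (f : ℕ → M) (N : ℕ) :
    ∑ m ∈ Finset.range N, f m
      = ∑ j ∈ Finset.range ((N + 1) / 2), f (2 * j)
        + ∑ j ∈ Finset.range (N / 2), f (2 * j + 1) := by
  induction N with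
  | zero => simp
  | succ N ih =>
    rcases Nat.even_or_odd N with ⟨c, hc⟩ | ⟨c, hc⟩
    · have h1 : (N + 1 + 1) / 2 = (N + 1) / 2 + 1 := by omega
      have h2 : (N + 1) / 2 = N / 2 := by omega
      have h3 : N = 2 * ((N+1)/2) := by omega
      have h4 : f N = f (2 * ((N+1)/2)) := by rw [← h3]
      rw [Finset.sum_range_succ, ih, h1, Finset.sum_range_succ, h4, h2]
      abel
    · have h1 : (N + 1 + 1) / 2 = (N + 1) / 2 := by omega
      have h2 : (N + 1) / 2 = N / 2 + 1 := by omega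
      have h3 : N = 2 * (N/2) + 1 := by omega
      have h4 : f N = f (2 * (N/2) + 1) := by rw [← h3]
      rw [Finset.sum_range_succ, ih, h1, h2, Finset.sum_range_succ, h4]
      rw [Finset.sum_range_succ]
      abel

lemma prod_eq_bval_aval {n : ℕ} (hn : 1 ≤ n) (y : Fin n → ℝ) :
    ∏ j, (1 + (y j : ℂ) * Complex.I) = (bVal y : ℂ) + (aVal y : ℂ) * Complex.I := by
  have h1 : ∏ j, (1 + (y j : ℂ) * Complex.I)
      = ∑ S ∈ (Finset.univ : Finset (Fin n)).powerset,
          (∏ i ∈ S, (y i : ℂ) * Complex.I) := by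
    rw [show (fun j : Fin n => 1 + (y j : ℂ) * Complex.I)
        = fun j : Fin n => (y j : ℂ) * Complex.I + 1 by funext j; ring]
    rw [Finset.prod_add]
    simp
  have h2 : ∏ j, (1 + (y j : ℂ) * Complex.I)
      = ∑ m ∈ Finset.range (n + 1), Complex.I ^ m * (esymmVal m y : ℂ) := by
    rw [h1, Finset.powerset_card_disjiUnion]; erw [Finset.sum_disjiUnion]
    simp only [Finset.card_univ, Fintype.card_fin]
    refine Finset.sum_congr rfl fun m _ => ?_
    rw [esymmVal]
    push_cast
    rw [Finset.mul_sum]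
    refine Finset.sum_congr rfl fun S hS => ?_
    have hcard : S.card = m := (Finset.mem_powersetCard.mp hS).2
    rw [Finset.prod_mul_distrib, Finset.prod_const, hcard, mul_comm]
  rw [h2, sum_range_even_odd (fun m => Complex.I ^ m * (esymmVal m y : ℂ)) (n+1)]
  have he : ∀ j : ℕ, Complex.I ^ (2 * j) = ((-1 : ℂ)) ^ j := by
    intro j; rw [pow_mul, Complex.I_sq]
  have hr1 : (n + 1 + 1) / 2 = n / 2 + 1 := by omega
  have hr2 : (n + 1) / 2 = (n - 1) / 2 + 1 := by omega
  rw [hr1, hr2, bVal, aVal]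
  push_cast
  rw [Finset.sum_mul]
  congr 1
  · refine Finset.sum_congr rfl fun j _ => ?_
    rw [he j]; try ring
  · refine Finset.sum_congr rfl fun j _ => ?_
    rw [pow_succ, pow_mul, Complex.I_sq]; ring

theorem stmt_4 (n : ℕ) (hn : 1 ≤ n) (x : Fin n → ℝ) (hb : bVal x ≠ 0) (k : Fin n) :
    HasDerivAt
      (fun t : ℝ =>
        Real.arctan (aVal (Function.update x k t) / bVal (Function.update x k t)))
      (1 / (1 + (x k) ^ 2)) (x k) := by
  classical
  set P : ℂ := ∏ j ∈ (Finset.univ : Finset (Fin n)).erase k, (1 + (x j : ℂ) * Complex.I)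
    with hP
  set p : ℝ := P.re
  set q : ℝ := P.im
  -- key: values of aVal, bVal along the update
  have key : ∀ t : ℝ, bVal (Function.update x k t) = p - t * q
      ∧ aVal (Function.update x k t) = q + t * p := by
    intro t
    have hfun : (fun j : Fin n => 1 + ((Function.update x k t j : ℝ) : ℂ) * Complex.I)
        = Function.update (fun j : Fin n => 1 + (x j : ℂ) * Complex.I) k
            (1 + (t : ℂ) * Complex.I) := by
      funext j
      by_cases hj : j = k
      · subst hj; simp
      · simp [Function.update_of_ne hj]
    have hprod : ∏ j, (1 + ((Function.update x k t j : ℝ) : ℂ) * Complex.I)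
        = (1 + (t : ℂ) * Complex.I) * P := by
      rw [hfun, Finset.prod_update_of_mem (Finset.mem_univ k)]
      rw [hP, ← Finset.erase_eq]
    have := prod_eq_bval_aval hn (Function.update x k t)
    rw [hprod] at this
    have hre := congrArg Complex.re this
    have him := congrArg Complex.im this
    simp [Complex.add_re, Complex.add_im, Complex.mul_re, Complex.mul_im] at hre him
    constructor
    · rw [← hre]; try ring
    · rw [← him]; try ring
  have hbx : bVal x = p - x k * q := by
    have := (key (x k)).1
    rwa [Function.update_eq_self] at this
  have hax : aVal x = q + x k * p := by
    have := (key (x k)).2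
    rwa [Function.update_eq_self] at this
  have hb0 : p - x k * q ≠ 0 := hbx ▸ hb
  have hpq : p ^ 2 + q ^ 2 ≠ 0 := by
    intro h
    have hp : p = 0 := by nlinarith [sq_nonneg p, sq_nonneg q]
    have hq : q = 0 := by nlinarith [sq_nonneg p, sq_nonneg q]
    apply hb0; rw [hp, hq]; ring
  -- the function rewritten
  have hfeq : (fun t : ℝ =>
        Real.arctan (aVal (Function.update x k t) / bVal (Function.update x k t)))
      = fun t : ℝ => Real.arctan ((q + t * p) / (p - t * q)) := by
    funext t
    rw [(key t).1, (key t).2]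
  rw [hfeq]
  have h1 : HasDerivAt (fun t : ℝ => q + t * p) p (x k) := by
    simpa using ((hasDerivAt_id (x k)).mul_const p).const_add q
  have h2 : HasDerivAt (fun t : ℝ => p - t * q) (-q) (x k) := by
    simpa using ((hasDerivAt_id (x k)).mul_const q).const_sub p
  have hdiv := h1.div h2 hb0
  have harctan := (Real.hasDerivAt_arctan ((q + x k * p) / (p - x k * q))).comp (x k) hdiv
  convert harctan using 1 <;> try rfl
  field_simp
  ring
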